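/- The integral $\int_0^\pi \log^5(2\sin(\theta/2))\,d\theta = -\frac{45}{2}\pi\,\zeta(5) - \frac{5}{4}\pi^3\zeta(3)$. -/

import Mathlib

open Real

noncomputable section
namespace Ls6
open MeasureTheory intervalIntegral Set Filter Topology

/-- The open interval `(-1/2, 1/2)` on which we work. -/
def II : Set ℝ := Set.Ioo (-(1/2) : ℝ) (1/2)

lemma isOpen_II : IsOpen II := isOpen_Ioo
lemma zero_mem_II : (0:ℝ) ∈ II := by constructor <;> norm_num

/-- term of the differentiated series -/
def ee (j k : ℕ) (x : ℝ) : ℝ := 2 / (2*(k:ℝ) + x)^j - 1 / ((k:ℝ) + x)^j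

/-- the sums `S_j`. -/
def SS (j : ℕ) (x : ℝ) : ℝ := ∑' k : ℕ, ee j (k+1) x

/-- log of the Gamma-ratio. -/
def g0 (x : ℝ) : ℝ :=
  ∑' k : ℕ, (2 * Real.log (1 + x/(2*((k:ℝ)+1))) - Real.log (1 + x/((k:ℝ)+1)))

/-- the log-sine integrand -/
def LL (θ : ℝ) : ℝ := Real.log (2 * Real.sin (θ/2))

/-- the family of integrals -/
def FF (k : ℕ) (x : ℝ) : ℝ := ∫ θ in (0:ℝ)..π, (LL θ)^k * (2 * Real.sin (θ/2)) ^ x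

lemma aux_k_le {k : ℕ} (hk : 1 ≤ k) {x : ℝ} (hx : x ∈ II) :
    (k:ℝ)/2 ≤ (k:ℝ) + x ∧ (k:ℝ) ≤ 2*(k:ℝ) + x ∧ 0 < (k:ℝ) + x ∧ 0 < 2*(k:ℝ) + x := by
  have h1 : (1:ℝ) ≤ (k:ℝ) := by exact_mod_cast hk
  obtain ⟨h2, h3⟩ := hx
  refine ⟨by linarith, by linarith, by linarith, by linarith⟩

lemma abs_ee_le {j k : ℕ} (hj : 2 ≤ j) (hk : 1 ≤ k) {x : ℝ} (hx : x ∈ II) :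
    |ee j k x| ≤ 2^(j+1) / (k:ℝ)^2 := by
  obtain ⟨h1, h2, h3, h4⟩ := aux_k_le hk hx
  have hk1 : (1:ℝ) ≤ (k:ℝ) := by exact_mod_cast hk
  have hk0 : (0:ℝ) < (k:ℝ) := by linarith
  have hkj : (k:ℝ)^2 ≤ (k:ℝ)^j := pow_le_pow_right₀ hk1 hj
  have h2j : (2:ℝ) ≤ 2^j := by
    calc (2:ℝ) = 2^1 := (pow_one 2).symm
    _ ≤ 2^j := pow_le_pow_right₀ one_le_two (by omega)
  calc |ee j k x| ≤ |2 / (2*(k:ℝ) + x)^j| + |1 / ((k:ℝ) + x)^j| := abs_sub _ _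
    _ = 2 / (2*(k:ℝ) + x)^j + 1 / ((k:ℝ) + x)^j := by
        rw [abs_of_pos (by positivity), abs_of_pos (by positivity)]
    _ ≤ 2 / (k:ℝ)^j + 1 / ((k:ℝ)/2)^j := by
        gcongr <;> first
          | exact pow_pos hk0 j
          | exact pow_pos (by positivity : (0:ℝ) < (k:ℝ)/2) j
          | exact pow_le_pow_left₀ (by positivity) h2 j
          | exact pow_le_pow_left₀ (by positivity) h1 j
    _ = 2 / (k:ℝ)^j + 2^j / (k:ℝ)^j := by rw [div_pow, one_div_div]
    _ ≤ 2 / (k:ℝ)^2 + 2^j / (k:ℝ)^2 := by gcongr <;> positivity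
    _ = (2 + 2^j) / (k:ℝ)^2 := by ring
    _ ≤ 2^(j+1) / (k:ℝ)^2 := by
        have h2j' : (2:ℝ) + 2^j ≤ 2^(j+1) := by rw [pow_succ]; linarith
        exact div_le_div_of_nonneg_right h2j' (by positivity) |>.trans_eq rfl

lemma hasDerivAt_ee {j k : ℕ} (hk : 1 ≤ k) {x : ℝ} (hx : x ∈ II) :
    HasDerivAt (ee (j+1) k) (-((j:ℝ)+1) * ee (j+2) k x) x := by
  obtain ⟨h1, h2, h3, h4⟩ := aux_k_le hk hx
  have hA : HasDerivAt (fun y : ℝ => 2*(k:ℝ) + y) 1 x := (hasDerivAt_id x).const_add _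
  have hB : HasDerivAt (fun y : ℝ => (k:ℝ) + y) 1 x := (hasDerivAt_id x).const_add _
  have hAp : HasDerivAt (fun y : ℝ => (2*(k:ℝ) + y)^(j+1))
      (((j:ℝ)+1) * (2*(k:ℝ) + x)^j * 1) x := by
    have := hA.fun_pow (j+1)
    simpa using this
  have hBp : HasDerivAt (fun y : ℝ => ((k:ℝ) + y)^(j+1))
      (((j:ℝ)+1) * ((k:ℝ) + x)^j * 1) x := by
    have := hB.fun_pow (j+1)
    simpa using this
  have hAne : (2*(k:ℝ) + x)^(j+1) ≠ 0 := pow_ne_zero _ (ne_of_gt h4)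
  have hBne : ((k:ℝ) + x)^(j+1) ≠ 0 := pow_ne_zero _ (ne_of_gt h3)
  have hd := ((hasDerivAt_const x (2:ℝ)).fun_div hAp hAne).fun_sub
    ((hasDerivAt_const x (1:ℝ)).fun_div hBp hBne)
  have heq : (fun y => 2 / (2*(k:ℝ) + y)^(j+1) - 1 / ((k:ℝ) + y)^(j+1)) = ee (j+1) k := rfl
  rw [heq] at hd
  refine hd.congr_deriv (Eq.symm ?_)
  have hAne' : (2*(k:ℝ) + x) ≠ 0 := ne_of_gt h4
  have hBne' : ((k:ℝ) + x) ≠ 0 := ne_of_gt h3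
  simp only [ee]
  field_simp
  ring

lemma summable_inv_sq : Summable (fun k : ℕ => 1 / ((k:ℝ)+1)^2) := by
  have h : Summable (fun n : ℕ => 1 / (n:ℝ)^2) := summable_one_div_nat_pow.mpr one_lt_two
  have := (summable_nat_add_iff 1).mpr h
  refine this.congr fun k => ?_
  push_cast
  ring_nf

lemma summable_ee_zero (j : ℕ) : Summable (fun k : ℕ => ee (j+1) (k+1) 0) := by
  rcases Nat.eq_zero_or_pos j with hj | hj
  · subst hj
    refine summable_zero.congr fun k => ?_
    have hk : ((k:ℝ)+1) ≠ 0 := by positivity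
    simp only [ee]
    push_cast
    field_simp
    ring
  · have hs : Summable (fun k : ℕ => (2:ℝ)^(j+2) / ((k:ℝ)+1)^2) :=
      (summable_inv_sq.mul_left ((2:ℝ)^(j+2))).congr (fun k => by rw [mul_one_div])
    refine Summable.of_norm_bounded hs fun k => ?_
    have h := abs_ee_le (j := j+1) (k := k+1) (by omega) (by omega) zero_mem_II
    rw [Real.norm_eq_abs]
    refine h.trans (le_of_eq ?_)
    push_cast
    ring

lemma summable_ee {j : ℕ} {x : ℝ} (hx : x ∈ II) : Summable (fun k : ℕ => ee (j+2) (k+1) x) := by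
  have hs : Summable (fun k : ℕ => (2:ℝ)^(j+3) / ((k:ℝ)+1)^2) :=
    (summable_inv_sq.mul_left ((2:ℝ)^(j+3))).congr (fun k => by rw [mul_one_div])
  refine Summable.of_norm_bounded hs fun k => ?_
  have h := abs_ee_le (j := j+2) (k := k+1) (by omega) (by omega) hx
  rw [Real.norm_eq_abs]
  refine h.trans (le_of_eq ?_)
  push_cast
  ring

lemma hasDerivAt_SS {j : ℕ} {x : ℝ} (hx : x ∈ II) :
    HasDerivAt (SS (j+1)) (-((j:ℝ)+1) * SS (j+2) x) x := by
  have key : HasDerivAt (fun z => ∑' k : ℕ, ee (j+1) (k+1) z)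
      (∑' k : ℕ, -((j:ℝ)+1) * ee (j+2) (k+1) x) x := by
    refine hasDerivAt_tsum_of_isPreconnected
      (u := fun k : ℕ => ((j:ℝ)+1) * ((2:ℝ)^(j+3) / ((k:ℝ)+1)^2))
      ?_ isOpen_II (convex_Ioo _ _).isPreconnected
      (fun k y hy => hasDerivAt_ee (by omega) hy)
      (fun k y hy => ?_) zero_mem_II (summable_ee_zero j) hx
    · exact ((summable_inv_sq.mul_left ((2:ℝ)^(j+3))).congr
        (fun k => by rw [mul_one_div])).mul_left _
    · rw [Real.norm_eq_abs, abs_mul]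
      have h := abs_ee_le (j := j+2) (k := k+1) (by omega) (by omega) hy
      push_cast at h
      have h1 : |(-((j:ℝ)+1))| = (j:ℝ)+1 := by
        rw [abs_neg, abs_of_pos (by positivity)]
      rw [h1]
      exact mul_le_mul_of_nonneg_left h (by positivity)
  show HasDerivAt (fun z => ∑' k : ℕ, ee (j+1) (k+1) z) (-((j:ℝ)+1) * SS (j+2) x) x
  simpa only [SS, tsum_mul_left] using key

lemma ee_one_eq {k : ℕ} (hk : 1 ≤ k) {x : ℝ} (hx : x ∈ II) :
    ee 1 k x = x / ((2*(k:ℝ)+x) * ((k:ℝ)+x)) := by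
  obtain ⟨h1, h2, h3, h4⟩ := aux_k_le hk hx
  simp only [ee, pow_one]
  field_simp
  ring

lemma abs_ee_one_le {k : ℕ} (hk : 1 ≤ k) {x : ℝ} (hx : x ∈ II) :
    |ee 1 k x| ≤ 1 / (k:ℝ)^2 := by
  obtain ⟨h1, h2, h3, h4⟩ := aux_k_le hk hx
  have hk0 : (0:ℝ) < (k:ℝ) := by
    have : (1:ℝ) ≤ (k:ℝ) := by exact_mod_cast hk
    linarith
  have hxb : |x| ≤ 1/2 := by
    obtain ⟨ha, hb⟩ := hx
    rw [abs_le]; constructor <;> linarith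
  have hden : (0:ℝ) < (2*(k:ℝ)+x) * ((k:ℝ)+x) := mul_pos h4 h3
  rw [ee_one_eq hk hx, abs_div, abs_of_pos hden]
  calc |x| / ((2*(k:ℝ)+x) * ((k:ℝ)+x)) ≤ (1/2) / ((k:ℝ) * ((k:ℝ)/2)) := by
        refine div_le_div₀ (by norm_num) hxb (mul_pos hk0 (by linarith)) ?_
        exact mul_le_mul h2 h1 (by linarith) (by linarith)
    _ = 1 / (k:ℝ)^2 := by field_simp

lemma log_approx {a : ℝ} (ha : |a| ≤ 1/2) : |Real.log (1+a) - a| ≤ 2*a^2 := by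
  have h1 : |(-a)| < 1 := by rw [abs_neg]; linarith [abs_nonneg a]
  have h2 := Real.abs_log_sub_add_sum_range_le h1 1
  simp only [Finset.sum_range_one, pow_one, Nat.cast_zero, zero_add, div_one, abs_neg,
    sub_neg_eq_add] at h2
  have h3 : Real.log (1+a) - a = (-a) + Real.log (1+a) := by ring
  rw [h3]
  refine h2.trans ?_
  have h4 : (1:ℝ)/2 ≤ 1 - |a| := by linarith
  calc |a|^2 / (1 - |a|) ≤ |a|^2 / (1/2) :=
        div_le_div_of_nonneg_left (by positivity) (by norm_num) h4
    _ = 2*a^2 := by rw [sq_abs]; ring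

lemma hasDerivAt_logterm {k : ℕ} {x : ℝ} (hx : x ∈ II) :
    HasDerivAt (fun y : ℝ => 2 * Real.log (1 + y/(2*((k:ℝ)+1))) - Real.log (1 + y/((k:ℝ)+1)))
      (ee 1 (k+1) x) x := by
  have hc : (0:ℝ) < (k:ℝ)+1 := by positivity
  obtain ⟨hx1, hx2⟩ := hx
  have hk1 : (0:ℝ) ≤ (k:ℝ) := Nat.cast_nonneg k
  have hkp : (0:ℝ) < 2*((k:ℝ)+1) := by positivity
  have hkp' : (0:ℝ) < (k:ℝ)+1 := by positivity
  have h1 : (0:ℝ) < 1 + x/(2*((k:ℝ)+1)) := by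
    have h5 : -(1:ℝ)/2 ≤ x/(2*((k:ℝ)+1)) := (le_div_iff₀ hkp).mpr (by nlinarith)
    linarith
  have h2 : (0:ℝ) < 1 + x/((k:ℝ)+1) := by
    have h5 : -(1:ℝ)/2 ≤ x/((k:ℝ)+1) := (le_div_iff₀ hkp').mpr (by nlinarith)
    linarith
  have hA : HasDerivAt (fun y : ℝ => 1 + y/(2*((k:ℝ)+1))) (1/(2*((k:ℝ)+1))) x := by
    simpa using ((hasDerivAt_id x).div_const (2*((k:ℝ)+1))).const_add 1
  have hB : HasDerivAt (fun y : ℝ => 1 + y/((k:ℝ)+1)) (1/((k:ℝ)+1)) x := by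
    simpa using ((hasDerivAt_id x).div_const ((k:ℝ)+1)).const_add 1
  have hA' := (hA.log (ne_of_gt h1)).const_mul 2
  have hd := hA'.fun_sub (hB.log (ne_of_gt h2))
  refine hd.congr_deriv (Eq.symm ?_)
  have p1 : (0:ℝ) < 2*((k:ℝ)+1)+x := by linarith
  have p2 : (0:ℝ) < (k:ℝ)+1+x := by linarith
  simp only [ee, pow_one]
  push_cast
  field_simp

lemma hasDerivAt_g0 {x : ℝ} (hx : x ∈ II) : HasDerivAt g0 (SS 1 x) x := by
  have key : HasDerivAt
      (fun z => ∑' k : ℕ, (2 * Real.log (1 + z/(2*((k:ℝ)+1))) - Real.log (1 + z/((k:ℝ)+1))))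
      (∑' k : ℕ, ee 1 (k+1) x) x := by
    refine hasDerivAt_tsum_of_isPreconnected
      (u := fun k : ℕ => 1 / ((k:ℝ)+1)^2)
      summable_inv_sq isOpen_II (convex_Ioo _ _).isPreconnected
      (fun k y hy => hasDerivAt_logterm hy)
      (fun k y hy => ?_) zero_mem_II ?_ hx
    · rw [Real.norm_eq_abs]
      have h := abs_ee_one_le (k := k+1) (by omega) hy
      push_cast at h
      exact h
    · refine summable_zero.congr fun k => ?_
      simp
  exact key

lemma summable_logterm {x : ℝ} (hx : x ∈ II) :
    Summable (fun k : ℕ => 2 * Real.log (1 + x/(2*((k:ℝ)+1))) - Real.log (1 + x/((k:ℝ)+1))) := by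
  obtain ⟨hx1, hx2⟩ := hx
  have hxb : |x| ≤ 1/2 := by rw [abs_le]; constructor <;> linarith
  refine Summable.of_norm_bounded summable_inv_sq fun k => ?_
  have hk1 : (0:ℝ) ≤ (k:ℝ) := Nat.cast_nonneg k
  have hc : (1:ℝ) ≤ (k:ℝ)+1 := by linarith
  have hc0 : ((k:ℝ)+1) ≠ 0 := by positivity
  have ha : |x/(2*((k:ℝ)+1))| ≤ 1/2 := by
    rw [abs_div, abs_of_pos (show (0:ℝ) < 2*((k:ℝ)+1) by positivity),
      div_le_iff₀ (show (0:ℝ) < 2*((k:ℝ)+1) by positivity)]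
    nlinarith [abs_nonneg x]
  have hb : |x/((k:ℝ)+1)| ≤ 1/2 := by
    rw [abs_div, abs_of_pos (show (0:ℝ) < (k:ℝ)+1 by positivity),
      div_le_iff₀ (show (0:ℝ) < (k:ℝ)+1 by positivity)]
    nlinarith [abs_nonneg x]
  have H1 := log_approx ha
  have H2 := log_approx hb
  have hab : 2*(x/(2*((k:ℝ)+1))) = x/((k:ℝ)+1) := by
    rw [mul_div_assoc']
    rw [mul_comm]
    rw [← div_div]
    rw [mul_div_assoc]
    rw [div_self (by norm_num : (2:ℝ) ≠ 0)]
    rw [mul_one]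
  have key : 2 * Real.log (1 + x/(2*((k:ℝ)+1))) - Real.log (1 + x/((k:ℝ)+1))
      = 2*(Real.log (1 + x/(2*((k:ℝ)+1))) - x/(2*((k:ℝ)+1)))
        - (Real.log (1 + x/((k:ℝ)+1)) - x/((k:ℝ)+1)) := by
    rw [mul_sub, hab]
    ring
  rw [Real.norm_eq_abs, key]
  calc |2*(Real.log (1 + x/(2*((k:ℝ)+1))) - x/(2*((k:ℝ)+1)))
        - (Real.log (1 + x/((k:ℝ)+1)) - x/((k:ℝ)+1))|
      ≤ |2*(Real.log (1 + x/(2*((k:ℝ)+1))) - x/(2*((k:ℝ)+1)))|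
        + |Real.log (1 + x/((k:ℝ)+1)) - x/((k:ℝ)+1)| := abs_sub _ _
    _ ≤ 2*(2*(x/(2*((k:ℝ)+1)))^2) + 2*(x/((k:ℝ)+1))^2 := by
        rw [abs_mul, abs_two]
        gcongr
    _ = 3*x^2/((k:ℝ)+1)^2 := by field_simp; ring
    _ ≤ 1 / ((k:ℝ)+1)^2 := by
        have hx2' : x^2 ≤ 1/4 := by nlinarith [abs_nonneg x, sq_abs x]
        exact div_le_div_of_nonneg_right (by nlinarith) (by positivity)

lemma pos_aux {k : ℕ} {x : ℝ} (hx : x ∈ II) :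
    (0:ℝ) < 1 + x/(2*((k:ℝ)+1)) ∧ (0:ℝ) < 1 + x/((k:ℝ)+1) := by
  obtain ⟨hx1, hx2⟩ := hx
  have hk1 : (0:ℝ) ≤ (k:ℝ) := Nat.cast_nonneg k
  have hkp : (0:ℝ) < 2*((k:ℝ)+1) := by positivity
  have hkp' : (0:ℝ) < (k:ℝ)+1 := by positivity
  constructor
  · have h5 : -(1:ℝ)/2 ≤ x/(2*((k:ℝ)+1)) := (le_div_iff₀ hkp).mpr (by nlinarith)
    linarith
  · have h5 : -(1:ℝ)/2 ≤ x/((k:ℝ)+1) := (le_div_iff₀ hkp').mpr (by nlinarith)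
    linarith

lemma prod_range_cast_factorial (m : ℕ) :
    (∏ k ∈ Finset.range m, ((k:ℝ)+1)) = (m.factorial : ℝ) := by
  induction m with
  | zero => simp
  | succ n ih =>
      rw [Finset.prod_range_succ, ih, Nat.factorial_succ]
      push_cast
      ring

lemma exp_g0 {x : ℝ} (hx : x ∈ II) :
    Real.exp (g0 x) = Real.Gamma (1+x) / (Real.Gamma (1+x/2))^2 := by
  obtain ⟨hx1, hx2⟩ := hx
  -- the partial products
  set q : ℕ → ℝ := fun k => (1 + x/(2*((k:ℝ)+1)))^2 / (1 + x/((k:ℝ)+1)) with hq_def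
  -- exponential of partial sums equals partial products
  have hexp_eq : ∀ n : ℕ, Real.exp (∑ k ∈ Finset.range n,
      (2 * Real.log (1 + x/(2*((k:ℝ)+1))) - Real.log (1 + x/((k:ℝ)+1))))
      = ∏ k ∈ Finset.range n, q k := by
    intro n
    rw [Real.exp_sum]
    refine Finset.prod_congr rfl fun k _ => ?_
    obtain ⟨hp1, hp2⟩ := pos_aux (k := k) (x := x) ⟨hx1, hx2⟩
    rw [Real.exp_sub, two_mul, Real.exp_add, Real.exp_log hp1, Real.exp_log hp2, hq_def]
    dsimp only
    rw [sq]
  have hsum := summable_logterm ⟨hx1, hx2⟩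
  have hps := hsum.hasSum.tendsto_sum_nat
  have h1 : Filter.Tendsto (fun n : ℕ => ∏ k ∈ Finset.range n, q k) Filter.atTop
      (𝓝 (Real.exp (g0 x))) := by
    have := (Real.continuous_exp.tendsto (g0 x)).comp hps
    refine this.congr fun n => ?_
    exact hexp_eq n
  have h2 : Filter.Tendsto (fun n : ℕ => ∏ k ∈ Finset.range (n+1), q k) Filter.atTop
      (𝓝 (Real.exp (g0 x))) := h1.comp (Filter.tendsto_add_atTop_nat 1)
  -- Gamma side
  have hGpos : 0 < Real.Gamma (1+x/2) := Real.Gamma_pos_of_pos (by linarith)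
  have hG : Filter.Tendsto
      (fun n : ℕ => Real.GammaSeq (1+x) n / (Real.GammaSeq (1+x/2) n)^2) Filter.atTop
      (𝓝 (Real.Gamma (1+x) / (Real.Gamma (1+x/2))^2)) :=
    (Real.GammaSeq_tendsto_Gamma (1+x)).div
      ((Real.GammaSeq_tendsto_Gamma (1+x/2)).pow 2) (pow_ne_zero 2 hGpos.ne')
  -- key algebraic identity
  have key : ∀ n : ℕ, 1 ≤ n → Real.GammaSeq (1+x) n / (Real.GammaSeq (1+x/2) n)^2
      = (((n:ℝ)+1)/n) * ∏ k ∈ Finset.range (n+1), q k := by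
    intro n hn
    have hn0 : (0:ℝ) < (n:ℝ) := by exact_mod_cast hn
    have hnfac : ((n.factorial : ℕ):ℝ) ≠ 0 := by
      exact_mod_cast (Nat.factorial_pos n).ne'
    set A : ℝ := ∏ j ∈ Finset.range (n+1), ((1+x) + (j:ℝ)) with hA_def
    set B : ℝ := ∏ j ∈ Finset.range (n+1), ((1+x/2) + (j:ℝ)) with hB_def
    have hApos : 0 < A := Finset.prod_pos fun j _ => by
      have : (0:ℝ) ≤ (j:ℝ) := Nat.cast_nonneg j
      linarith
    have hBpos : 0 < B := Finset.prod_pos fun j _ => by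
      have : (0:ℝ) ≤ (j:ℝ) := Nat.cast_nonneg j
      linarith
    have hb2 : ((n:ℝ)^((1:ℝ)+x/2))^2 = (n:ℝ) * (n:ℝ)^((1:ℝ)+x) := by
      rw [← Real.rpow_natCast ((n:ℝ)^((1:ℝ)+x/2)) 2, ← Real.rpow_mul hn0.le]
      rw [show ((1:ℝ)+x/2)*((2:ℕ):ℝ) = (1:ℝ)+((1:ℝ)+x) by push_cast; ring]
      rw [Real.rpow_add hn0, Real.rpow_one]
    have hrpos : (0:ℝ) < (n:ℝ)^((1:ℝ)+x) := Real.rpow_pos_of_pos hn0 _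
    have e1 : Real.GammaSeq (1+x) n / (Real.GammaSeq (1+x/2) n)^2
        = B^2/((n:ℝ) * (n.factorial:ℝ) * A) := by
      rw [Real.GammaSeq, Real.GammaSeq, ← hA_def, ← hB_def]
      rw [div_pow, mul_pow, hb2]
      field_simp
      
    have e2 : (∏ k ∈ Finset.range (n+1), q k) = B^2/(((n+1).factorial:ℝ) * A) := by
      have hq2 : ∀ k ∈ Finset.range (n+1), q k
          = ((1+x/2) + (k:ℝ))^2 / (((k:ℝ)+1) * ((1+x) + (k:ℝ))) := by
        intro k _
        obtain ⟨hp1, hp2⟩ := pos_aux (k := k) (x := x) ⟨hx1, hx2⟩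
        have hk0 : ((k:ℝ)+1) ≠ 0 := by positivity
        have hkc : (0:ℝ) ≤ (k:ℝ) := Nat.cast_nonneg k
        have h3 : (0:ℝ) < ((k:ℝ)+1) * ((1+x) + (k:ℝ)) := by nlinarith
        rw [hq_def]
        dsimp only
        rw [div_eq_div_iff hp2.ne' h3.ne']
        field_simp
        ring
      rw [Finset.prod_congr rfl hq2, Finset.prod_div_distrib, Finset.prod_mul_distrib,
        Finset.prod_pow, prod_range_cast_factorial, ← hA_def, ← hB_def]
    rw [e1, e2, Nat.factorial_succ]
    have hAne := hApos.ne'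
    have hBne := hBpos.ne'
    push_cast
    field_simp
    
  -- combine
  have h3 : Filter.Tendsto
      (fun n : ℕ => ((n:ℝ)/((n:ℝ)+1)) *
        (Real.GammaSeq (1+x) n / (Real.GammaSeq (1+x/2) n)^2)) Filter.atTop
      (𝓝 (1 * (Real.Gamma (1+x) / (Real.Gamma (1+x/2))^2))) :=
    (tendsto_natCast_div_add_atTop (1:ℝ)).mul hG
  rw [one_mul] at h3
  have h4 : ∀ᶠ n : ℕ in Filter.atTop, ((n:ℝ)/((n:ℝ)+1)) *
      (Real.GammaSeq (1+x) n / (Real.GammaSeq (1+x/2) n)^2)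
      = ∏ k ∈ Finset.range (n+1), q k := by
    filter_upwards [Filter.eventually_ge_atTop (1:ℕ)] with n hn
    have hn1 : (1:ℝ) ≤ (n:ℝ) := by exact_mod_cast hn
    have hn0 : (0:ℝ) < (n:ℝ) := by linarith
    rw [key n hn]
    field_simp
    
  exact tendsto_nhds_unique h2 (h3.congr' h4)

lemma real_beta {u v : ℝ} (hu : 0 < u) (hv : 0 < v) :
    ∫ t in (0:ℝ)..1, t^(u-1) * (1-t)^(v-1)
      = Real.Gamma u * Real.Gamma v / Real.Gamma (u+v) := by
  have h := Complex.Gamma_mul_Gamma_eq_betaIntegral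
    (s := (u:ℂ)) (t := (v:ℂ)) (by simpa using hu) (by simpa using hv)
  have heq : Complex.betaIntegral u v
      = ((∫ t in (0:ℝ)..1, t^(u-1) * (1-t)^(v-1) : ℝ) : ℂ) := by
    rw [Complex.betaIntegral, ← intervalIntegral.integral_ofReal]
    refine intervalIntegral.integral_congr fun t ht => ?_
    rw [Set.uIcc_of_le (by norm_num : (0:ℝ) ≤ 1)] at ht
    obtain ⟨ht0, ht1⟩ := ht
    rw [Complex.ofReal_mul, Complex.ofReal_cpow ht0, Complex.ofReal_cpow
      (by linarith : (0:ℝ) ≤ 1 - t)]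
    push_cast
    ring
  rw [heq, ← Complex.ofReal_add, Complex.Gamma_ofReal, Complex.Gamma_ofReal,
    Complex.Gamma_ofReal] at h
  have h' : Real.Gamma u * Real.Gamma v
      = Real.Gamma (u+v) * ∫ t in (0:ℝ)..1, t^(u-1) * (1-t)^(v-1) := by
    exact_mod_cast h
  have hne : Real.Gamma (u+v) ≠ 0 := (Real.Gamma_pos_of_pos (by linarith)).ne'
  field_simp
  linarith [h']

lemma sin_sq_image : (fun θ : ℝ => Real.sin (θ/2)^2) '' (Set.Ioo 0 π) = Set.Ioo 0 1 := by
  apply Set.Subset.antisymm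
  · rintro t ⟨θ, hθ, rfl⟩
    obtain ⟨h1, h2⟩ := hθ
    have hs0 : 0 < Real.sin (θ/2) := Real.sin_pos_of_pos_of_lt_pi (by linarith)
      (by linarith [Real.pi_pos])
    have hs1 : Real.sin (θ/2) < 1 := by
      have := Real.sin_lt_sin_of_lt_of_le_pi_div_two (x := θ/2) (y := π/2)
        (by linarith [Real.pi_pos]) le_rfl (by linarith)
      simpa [Real.sin_pi_div_two] using this
    constructor
    · positivity
    · nlinarith
  · have hc : ContinuousOn (fun θ : ℝ => Real.sin (θ/2)^2) (Set.Icc 0 π) :=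
      ((Real.continuous_sin.comp (continuous_id.div_const 2)).pow 2).continuousOn
    have := intermediate_value_Ioo (a := (0:ℝ)) (b := π) Real.pi_pos.le hc
    simpa using this

lemma sin_sq_injOn : Set.InjOn (fun θ : ℝ => Real.sin (θ/2)^2) (Set.Ioo 0 π) := by
  have hmono : StrictMonoOn (fun θ : ℝ => Real.sin (θ/2)^2) (Set.Ioo 0 π) := by
    intro a ha b hb hab
    have hsa : 0 < Real.sin (a/2) := Real.sin_pos_of_pos_of_lt_pi (by linarith [ha.1])
      (by linarith [ha.2, Real.pi_pos])
    have hlt : Real.sin (a/2) < Real.sin (b/2) :=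
      Real.sin_lt_sin_of_lt_of_le_pi_div_two (by linarith [ha.1, Real.pi_pos])
        (by linarith [hb.2]) (by linarith)
    dsimp only
    nlinarith
  exact hmono.injOn

lemma subst_lemma {x : ℝ} (hx : x ∈ II) :
    (∫ θ in (0:ℝ)..π, (Real.sin (θ/2)) ^ x)
      = ∫ t in (0:ℝ)..1, t^((x+1)/2-1) * (1-t)^((1:ℝ)/2-1) := by
  have h01 : (0:ℝ) ≤ 1 := by norm_num
  have h0pi : (0:ℝ) ≤ π := Real.pi_pos.le
  rw [intervalIntegral.integral_of_le h01, intervalIntegral.integral_of_le h0pi,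
    MeasureTheory.integral_Ioc_eq_integral_Ioo, MeasureTheory.integral_Ioc_eq_integral_Ioo]
  have hderiv : ∀ θ ∈ Set.Ioo (0:ℝ) π,
      HasDerivWithinAt (fun θ : ℝ => Real.sin (θ/2)^2)
        (Real.sin (θ/2) * Real.cos (θ/2)) (Set.Ioo 0 π) θ := by
    intro θ _
    have h1 : HasDerivAt (fun θ : ℝ => θ/2) (1/2) θ := (hasDerivAt_id θ).div_const 2
    have h2 : HasDerivAt (fun θ : ℝ => Real.sin (θ/2)) (Real.cos (θ/2) * (1/2)) θ :=
      h1.sin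
    have h3 := h2.fun_pow 2
    have : HasDerivAt (fun θ : ℝ => Real.sin (θ/2)^2)
        (Real.sin (θ/2) * Real.cos (θ/2)) θ := by
      refine h3.congr_deriv (Eq.symm ?_)
      ring
    exact this.hasDerivWithinAt
  have key := MeasureTheory.integral_image_eq_integral_abs_deriv_smul
    measurableSet_Ioo hderiv sin_sq_injOn
    (fun t => t^((x+1)/2-1) * (1-t)^((1:ℝ)/2-1))
  rw [sin_sq_image] at key
  rw [key]
  refine MeasureTheory.setIntegral_congr_fun measurableSet_Ioo fun θ hθ => ?_
  obtain ⟨h1, h2⟩ := hθ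
  have hs : 0 < Real.sin (θ/2) := Real.sin_pos_of_pos_of_lt_pi (by linarith)
    (by linarith [Real.pi_pos])
  have hcpos : 0 < Real.cos (θ/2) := Real.cos_pos_of_mem_Ioo
    ⟨by linarith [Real.pi_pos], by linarith⟩
  have hsq : Real.sin (θ/2)^2 = Real.sin (θ/2) ^ ((2:ℕ):ℝ) :=
    (Real.rpow_natCast _ 2).symm
  have hcsq : 1 - Real.sin (θ/2)^2 = Real.cos (θ/2)^2 := by
    nlinarith [Real.sin_sq_add_cos_sq (θ/2)]
  have e1 : (Real.sin (θ/2)^2) ^ ((x+1)/2-1) = Real.sin (θ/2) ^ (x-1) := by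
    rw [hsq, ← Real.rpow_mul hs.le]
    norm_num
    ring_nf
  have e2 : (1 - Real.sin (θ/2)^2) ^ ((1:ℝ)/2-1) = (Real.cos (θ/2))⁻¹ := by
    rw [hcsq]
    rw [show Real.cos (θ/2)^2 = Real.cos (θ/2) ^ ((2:ℕ):ℝ) from (Real.rpow_natCast _ 2).symm]
    rw [← Real.rpow_mul hcpos.le]
    norm_num [Real.rpow_neg_one]
  rw [e1, e2]
  rw [smul_eq_mul, abs_of_pos (by positivity)]
  rw [show Real.sin (θ/2) ^ (x-1) = Real.sin (θ/2) ^ x / Real.sin (θ/2) by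
    rw [Real.rpow_sub hs, Real.rpow_one]]
  field_simp

lemma FF_zero_eq {x : ℝ} (hx : x ∈ II) : FF 0 x = π * Real.exp (g0 x) := by
  obtain ⟨hx1, hx2⟩ := hx
  have hsqrtpi : Real.sqrt π ^ 2 = π := Real.sq_sqrt Real.pi_pos.le
  have hGhalf : Real.Gamma (1/2) = Real.sqrt π := Real.Gamma_one_half_eq
  have hGpos2 : 0 < Real.Gamma (1+x/2) := Real.Gamma_pos_of_pos (by linarith)
  -- step 1 : pull out 2^x
  have step1 : FF 0 x = (2:ℝ)^x * ∫ θ in (0:ℝ)..π, (Real.sin (θ/2)) ^ x := by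
    rw [FF, ← intervalIntegral.integral_const_mul]
    refine intervalIntegral.integral_congr fun θ hθ => ?_
    rw [Set.uIcc_of_le Real.pi_pos.le] at hθ
    have hs : 0 ≤ Real.sin (θ/2) := Real.sin_nonneg_of_nonneg_of_le_pi
      (by linarith [hθ.1]) (by linarith [hθ.2, Real.pi_pos])
    rw [pow_zero, one_mul, Real.mul_rpow (by norm_num) hs]
  -- step 2 : beta value
  have step2 : (∫ θ in (0:ℝ)..π, (Real.sin (θ/2)) ^ x)
      = Real.Gamma ((x+1)/2) * Real.sqrt π / Real.Gamma (1+x/2) := by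
    rw [subst_lemma ⟨hx1, hx2⟩, real_beta (by linarith) (by norm_num)]
    rw [show (x+1)/2 + 1/2 = 1+x/2 by ring, hGhalf]
  -- duplication formula
  have dup := Real.Gamma_mul_Gamma_add_half ((x+1)/2)
  rw [show (x+1)/2 + 1/2 = 1+x/2 by ring, show 2*((x+1)/2) = 1+x by ring,
    show (1:ℝ)-(1+x) = -x by ring] at dup
  have h2x : (2:ℝ)^x * (2:ℝ)^(-x) = 1 := by
    rw [← Real.rpow_add (by norm_num)]
    norm_num
  have hπ : Real.sqrt π * Real.sqrt π = π := Real.mul_self_sqrt Real.pi_pos.le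
  rw [step1, step2, exp_g0 ⟨hx1, hx2⟩]
  calc (2:ℝ)^x * (Real.Gamma ((x+1)/2) * Real.sqrt π / Real.Gamma (1+x/2))
      = (2:ℝ)^x * Real.sqrt π * (Real.Gamma ((x+1)/2) * Real.Gamma (1+x/2))
        / (Real.Gamma (1+x/2))^2 := by
        have halg : ∀ a s A G : ℝ, G ≠ 0 → a*(A*s/G) = a*s*(A*G)/G^2 := by
          intros a s A G hG
          field_simp
          
        exact halg _ _ _ _ hGpos2.ne'
    _ = (2:ℝ)^x * Real.sqrt π * (Real.Gamma (1+x) * (2:ℝ)^(-x) * Real.sqrt π)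
        / (Real.Gamma (1+x/2))^2 := by rw [dup]
    _ = π * (Real.Gamma (1+x) / (Real.Gamma (1+x/2))^2) := by
        rw [show (2:ℝ)^x * Real.sqrt π * (Real.Gamma (1+x) * (2:ℝ)^(-x) * Real.sqrt π)
          = ((2:ℝ)^x * (2:ℝ)^(-x)) * (Real.sqrt π * Real.sqrt π) * Real.Gamma (1+x) by ring,
          h2x, hπ]
        ring

/-- the dominating function -/
def BB (t : ℝ) : ℝ := (4*(37^6*64+1)) * (t ^ (-(1:ℝ)/2) + t ^ (-(4:ℝ)/5))

lemma sin_half_facts {t : ℝ} (ht : t ∈ Set.Ioc 0 π) :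
    0 < Real.sin (t/2) ∧ t/2 ≤ 2*Real.sin (t/2) ∧ 2*Real.sin (t/2) ≤ 2 := by
  obtain ⟨ht0, htpi⟩ := ht
  have hpi := Real.pi_pos
  have hs0 : 0 < Real.sin (t/2) :=
    Real.sin_pos_of_pos_of_lt_pi (by linarith) (by linarith)
  have hjordan := Real.mul_le_sin (x := t/2) (by linarith) (by linarith)
  have hple4 := Real.pi_le_four
  refine ⟨hs0, ?_, ?_⟩
  · rw [div_mul_eq_mul_div, div_le_iff₀ hpi] at hjordan
    nlinarith
  · linarith [Real.sin_le_one (t/2)]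

lemma rpow_bound {t x : ℝ} (ht : t ∈ Set.Ioc 0 π) (hx : x ∈ II) :
    (2 * Real.sin (t/2)) ^ x ≤ 4*t^(-(1:ℝ)/2) := by
  obtain ⟨hs0, hct, hc2⟩ := sin_half_facts ht
  obtain ⟨ht0, htpi⟩ := ht
  obtain ⟨hx1, hx2⟩ := hx
  have hc0 : (0:ℝ) < 2*Real.sin (t/2) := by linarith
  have hhalf : t^((1:ℝ)/2) ≤ 2 := by
    have h4 : t ≤ 4 := le_trans htpi Real.pi_le_four
    have h5 := Real.rpow_le_rpow ht0.le h4 (by norm_num : (0:ℝ) ≤ 1/2)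
    have h42 : (4:ℝ)^((1:ℝ)/2) = 2 := by
      rw [show (4:ℝ) = 2^(2:ℕ) by norm_num, ← Real.rpow_natCast 2 2,
        ← Real.rpow_mul (by norm_num : (0:ℝ) ≤ 2)]
      norm_num
    linarith [h5, h42.le, h42.ge]
  have hts : 0 < t^((1:ℝ)/2) := Real.rpow_pos_of_pos ht0 _
  have hneg : t^(-(1:ℝ)/2) = (t^((1:ℝ)/2))⁻¹ := by
    rw [show -(1:ℝ)/2 = -((1:ℝ)/2) by norm_num, Real.rpow_neg ht0.le]
  have h2le : (2:ℝ) ≤ 4*t^(-(1:ℝ)/2) := by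
    rw [hneg]
    have h5 : (2:ℝ)⁻¹ ≤ (t^((1:ℝ)/2))⁻¹ := by
      rw [inv_le_inv₀ (by norm_num) hts]
      exact hhalf
    nlinarith
  rcases le_or_gt 0 x with hx0 | hx0
  · calc (2*Real.sin (t/2))^x ≤ 2^x := Real.rpow_le_rpow hc0.le hc2 hx0
      _ ≤ 2^(1:ℝ) := Real.rpow_le_rpow_of_exponent_le one_le_two (by linarith)
      _ = 2 := Real.rpow_one 2
      _ ≤ 4*t^(-(1:ℝ)/2) := h2le
  · have h1 : (2*Real.sin (t/2))^x ≤ (t/2)^x :=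
      Real.rpow_le_rpow_of_nonpos (by positivity) hct hx0.le
    rcases le_or_gt (t/2) 1 with hb | hb
    · have h2 : (t/2)^x ≤ (t/2)^(-(1:ℝ)/2) :=
        Real.rpow_le_rpow_of_exponent_ge (by positivity) hb (by linarith)
      have h3 : (t/2)^(-(1:ℝ)/2) ≤ 4*t^(-(1:ℝ)/2) := by
        rw [Real.div_rpow ht0.le (by norm_num : (0:ℝ) ≤ 2)]
        have h2e : (1:ℝ)/4 ≤ (2:ℝ)^(-(1:ℝ)/2) := by
          have := Real.rpow_le_rpow_of_exponent_le one_le_two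
            (by norm_num : (-1:ℝ) ≤ -(1:ℝ)/2)
          rw [Real.rpow_neg_one] at this
          linarith
        have htp : 0 < t^(-(1:ℝ)/2) := Real.rpow_pos_of_pos ht0 _
        have h2ep : (0:ℝ) < (2:ℝ)^(-(1:ℝ)/2) := Real.rpow_pos_of_pos (by norm_num) _
        rw [div_le_iff₀ h2ep]
        nlinarith
      linarith
    · have h2 : (t/2)^x ≤ 1 := Real.rpow_le_one_of_one_le_of_nonpos hb.le hx0.le
      linarith

lemma log_bound {t : ℝ} (ht : t ∈ Set.Ioc 0 π) : |LL t| ≤ 1 + 36*t^(-(1:ℝ)/20) := by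
  obtain ⟨hs0, hct, hc2⟩ := sin_half_facts ht
  obtain ⟨ht0, htpi⟩ := ht
  have hc0 : (0:ℝ) < 2*Real.sin (t/2) := by linarith
  have ha0 : (0:ℝ) < t^(-(1:ℝ)/20) := Real.rpow_pos_of_pos ht0 _
  -- |log t| ≤ 36 * t^(-1/20)
  have hlogt : |Real.log t| ≤ 36*t^(-(1:ℝ)/20) := by
    rcases le_or_gt t 1 with h1t | h1t
    · have hinv : (0:ℝ) < t⁻¹ := by positivity
      have hl1 : Real.log (t⁻¹) = 20 * Real.log ((t⁻¹)^((1:ℝ)/20)) := by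
        rw [Real.log_rpow hinv]
        ring
      have hl2 : Real.log ((t⁻¹)^((1:ℝ)/20)) ≤ (t⁻¹)^((1:ℝ)/20) := by
        have := Real.log_le_sub_one_of_pos (Real.rpow_pos_of_pos hinv ((1:ℝ)/20))
        linarith
      have hl3 : (t⁻¹)^((1:ℝ)/20) = t^(-(1:ℝ)/20) := by
        rw [Real.inv_rpow ht0.le, ← Real.rpow_neg ht0.le]
        norm_num
      have habs : |Real.log t| = Real.log t⁻¹ := by
        rw [Real.log_inv, abs_of_nonpos (Real.log_nonpos ht0.le h1t)]
      rw [habs]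
      rw [hl3] at hl1 hl2
      linarith
    · have hlog_nonneg : 0 ≤ Real.log t := Real.log_nonneg h1t.le
      rw [abs_of_nonneg hlog_nonneg]
      have hA : t^((21:ℝ)/20) ≤ π^((21:ℝ)/20) :=
        Real.rpow_le_rpow ht0.le htpi (by norm_num)
      have hB : π^((21:ℝ)/20) ≤ 16 := by
        have he : π^((21:ℝ)/20) = π^(1:ℝ) * π^((1:ℝ)/20) := by
          rw [← Real.rpow_add Real.pi_pos]
          norm_num
        have h1 : π^((1:ℝ)/20) ≤ π^(1:ℝ) :=
          Real.rpow_le_rpow_of_exponent_le (by linarith [Real.pi_gt_three]) (by norm_num)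
        rw [Real.rpow_one] at h1
        have hq0 : (0:ℝ) < π^((1:ℝ)/20) := Real.rpow_pos_of_pos Real.pi_pos _
        rw [he, Real.rpow_one]
        nlinarith [Real.pi_le_four, Real.pi_pos, h1, hq0]
      have hsplit : t^((21:ℝ)/20) * t^(-(1:ℝ)/20) = t := by
        rw [← Real.rpow_add ht0]
        norm_num
      have htb : t ≤ 16 * t^(-(1:ℝ)/20) := by
        have h7 := mul_le_mul_of_nonneg_right (hA.trans hB) ha0.le
        calc t = t^((21:ℝ)/20) * t^(-(1:ℝ)/20) := hsplit.symm
          _ ≤ 16 * t^(-(1:ℝ)/20) := h7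
      have := Real.log_le_sub_one_of_pos ht0
      linarith
  -- conclude
  have hup : Real.log (2*Real.sin (t/2)) ≤ 1 := by
    have h1 : Real.log (2*Real.sin (t/2)) ≤ Real.log 2 := by
      exact Real.log_le_log hc0 hc2
    have := Real.log_le_sub_one_of_pos (by norm_num : (0:ℝ) < 2)
    linarith
  have hlow : -Real.log (2*Real.sin (t/2)) ≤ Real.log 2 - Real.log t := by
    have h1 : Real.log (t/2) ≤ Real.log (2*Real.sin (t/2)) :=
      Real.log_le_log (by positivity) hct
    have h2 : Real.log (t/2) = Real.log t - Real.log 2 :=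
      Real.log_div ht0.ne' (by norm_num)
    linarith
  have hlog2 : Real.log 2 ≤ 1 := by
    have := Real.log_le_sub_one_of_pos (by norm_num : (0:ℝ) < 2)
    linarith
  rw [LL, abs_le]
  constructor
  · have habs : -Real.log t ≤ |Real.log t| := neg_le_abs _
    nlinarith
  · nlinarith

lemma key_bound {m : ℕ} (hm : m ≤ 6) {t : ℝ} (ht : t ∈ Set.Ioc 0 π) {x : ℝ} (hx : x ∈ II) :
    |LL t|^m * (2 * Real.sin (t/2)) ^ x ≤ BB t := by
  obtain ⟨hs0, hct, hc2⟩ := sin_half_facts ht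
  have ht0 : (0:ℝ) < t := ht.1
  have ha0 : (0:ℝ) ≤ t^(-(1:ℝ)/20) := (Real.rpow_pos_of_pos ht0 _).le
  set a := t^(-(1:ℝ)/20) with ha_def
  have h6 : a^6 = t^(-(3:ℝ)/10) := by
    rw [ha_def, ← Real.rpow_natCast (t^(-(1:ℝ)/20)) 6, ← Real.rpow_mul ht0.le]
    norm_num
  have h1 : |LL t|^m ≤ 37^6*64*(1 + t^(-(3:ℝ)/10)) := by
    calc |LL t|^m ≤ (1+36*a)^m := pow_le_pow_left₀ (abs_nonneg _) (log_bound ht) m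
      _ ≤ (1+36*a)^6 := pow_le_pow_right₀ (by nlinarith) hm
      _ ≤ (37*(1+a))^6 := pow_le_pow_left₀ (by nlinarith) (by nlinarith) 6
      _ = 37^6 * (1+a)^6 := mul_pow 37 (1+a) 6
      _ ≤ 37^6 * (64*(1+a^6)) := by
          have hcase : (1+a)^6 ≤ 64*(1+a^6) := by
            rcases le_or_gt a 1 with hb | hb
            · have h2 : (1+a)^6 ≤ 2^6 := pow_le_pow_left₀ (by linarith) (by linarith) 6
              have h3 : (0:ℝ) ≤ a^6 := by positivity
              norm_num at h2
              nlinarith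
            · have h2 : (1+a)^6 ≤ (2*a)^6 := pow_le_pow_left₀ (by linarith) (by linarith) 6
              have h3 : (2*a)^6 = 64*a^6 := by ring
              nlinarith
          nlinarith [hcase]
      _ = 37^6*64*(1 + t^(-(3:ℝ)/10)) := by rw [← h6]; ring
  have h2 : (2 * Real.sin (t/2)) ^ x ≤ 4*t^(-(1:ℝ)/2) := rpow_bound ht hx
  have hcx : (0:ℝ) ≤ (2 * Real.sin (t/2)) ^ x := Real.rpow_nonneg (by linarith) x
  have hprod := mul_le_mul h1 h2 hcx (by positivity)
  refine hprod.trans ?_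
  have hadd : t^(-(3:ℝ)/10) * t^(-(1:ℝ)/2) = t^(-(4:ℝ)/5) := by
    rw [← Real.rpow_add ht0]
    norm_num
  have hp1 : (0:ℝ) < t^(-(1:ℝ)/2) := Real.rpow_pos_of_pos ht0 _
  have hp2 : (0:ℝ) < t^(-(4:ℝ)/5) := Real.rpow_pos_of_pos ht0 _
  rw [BB]
  nlinarith [hadd, hp1, hp2]

lemma BB_integrable : IntervalIntegrable BB MeasureTheory.volume 0 π := by
  have h1 : IntervalIntegrable (fun t : ℝ => t^(-(1:ℝ)/2)) MeasureTheory.volume 0 π :=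
    intervalIntegral.intervalIntegrable_rpow' (by norm_num)
  have h2 : IntervalIntegrable (fun t : ℝ => t^(-(4:ℝ)/5)) MeasureTheory.volume 0 π :=
    intervalIntegral.intervalIntegrable_rpow' (by norm_num)
  exact ((h1.add h2).const_mul _)

lemma cont_integrand (k : ℕ) (y : ℝ) :
    ContinuousOn (fun t => (LL t)^k * (2 * Real.sin (t/2)) ^ y) (Set.Ioc 0 π) := by
  have hsin : ContinuousOn (fun t : ℝ => 2 * Real.sin (t/2)) (Set.Ioc 0 π) :=
    (Real.continuous_sin.comp (continuous_id.div_const 2)).const_smul (2:ℝ) |>.continuousOn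
  have hpos : ∀ t ∈ Set.Ioc (0:ℝ) π, 2 * Real.sin (t/2) ≠ 0 := fun t ht =>
    (by linarith [(sin_half_facts ht).1] : (0:ℝ) < 2*Real.sin (t/2)).ne'
  have hL : ContinuousOn LL (Set.Ioc 0 π) := ContinuousOn.log hsin hpos
  exact (hL.pow k).mul (hsin.rpow_const fun t ht => Or.inl (hpos t ht))

lemma meas_integrand (k : ℕ) (y : ℝ) :
    MeasureTheory.AEStronglyMeasurable (fun t => (LL t)^k * (2 * Real.sin (t/2)) ^ y)
      (MeasureTheory.volume.restrict (Set.uIoc (0:ℝ) π)) := by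
  rw [Set.uIoc_of_le Real.pi_pos.le]
  exact (cont_integrand k y).aestronglyMeasurable measurableSet_Ioc

lemma integrable_integrand {k : ℕ} (hk : k ≤ 6) {y : ℝ} (hy : y ∈ II) :
    IntervalIntegrable (fun t => (LL t)^k * (2 * Real.sin (t/2)) ^ y)
      MeasureTheory.volume 0 π := by
  refine BB_integrable.mono_fun (meas_integrand k y) ?_
  rw [Filter.EventuallyLE, MeasureTheory.ae_restrict_iff' measurableSet_uIoc]
  refine Filter.Eventually.of_forall fun t ht => ?_
  rw [Set.uIoc_of_le Real.pi_pos.le] at ht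
  have h1 := key_bound hk ht hy
  have hcx : (0:ℝ) ≤ (2 * Real.sin (t/2)) ^ y :=
    Real.rpow_nonneg (by linarith [(sin_half_facts ht).1]) y
  rw [Real.norm_eq_abs, Real.norm_eq_abs, abs_mul, abs_pow, abs_of_nonneg hcx]
  calc |LL t|^k * (2 * Real.sin (t/2)) ^ y ≤ BB t := h1
    _ ≤ |BB t| := le_abs_self _

lemma hasDerivAt_FF {k : ℕ} (hk : k ≤ 5) {x : ℝ} (hx : x ∈ II) :
    HasDerivAt (FF k) (FF (k+1) x) x := by
  obtain ⟨hx1, hx2⟩ := hx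
  set ε : ℝ := min (x+1/2) (1/2-x) with hε_def
  have hε : 0 < ε := lt_min (by linarith) (by linarith)
  have hball : Metric.ball x ε ⊆ II := by
    intro y hy
    rw [Metric.mem_ball, Real.dist_eq, abs_sub_lt_iff] at hy
    constructor
    · have := hy.2
      have h1 : ε ≤ x+1/2 := min_le_left _ _
      linarith
    · have := hy.1
      have h1 : ε ≤ 1/2-x := min_le_right _ _
      linarith
  have key := intervalIntegral.hasDerivAt_integral_of_dominated_loc_of_deriv_le
    (F := fun y t => (LL t)^k * (2 * Real.sin (t/2)) ^ y)
    (F' := fun y t => (LL t)^(k+1) * (2 * Real.sin (t/2)) ^ y)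
    (x₀ := x) (a := 0) (b := π) (bound := BB) (Metric.ball_mem_nhds x hε)
    (Filter.Eventually.of_forall fun y => meas_integrand k y)
    (integrable_integrand (by omega) ⟨hx1, hx2⟩)
    (meas_integrand (k+1) x)
    ?_ BB_integrable ?_
  · exact key.2
  · refine Filter.Eventually.of_forall fun t ht y hy => ?_
    rw [Set.uIoc_of_le Real.pi_pos.le] at ht
    have h1 := key_bound (m := k+1) (by omega) ht (hball hy)
    have hcx : (0:ℝ) ≤ (2 * Real.sin (t/2)) ^ y :=
      Real.rpow_nonneg (by linarith [(sin_half_facts ht).1]) y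
    rw [Real.norm_eq_abs, abs_mul, abs_pow, abs_of_nonneg hcx]
    exact h1
  · refine Filter.Eventually.of_forall fun t ht y hy => ?_
    rw [Set.uIoc_of_le Real.pi_pos.le] at ht
    have hc0 : (0:ℝ) < 2 * Real.sin (t/2) := by linarith [(sin_half_facts ht).1]
    have hexp : HasDerivAt (fun y : ℝ => (2 * Real.sin (t/2)) ^ y)
        ((2 * Real.sin (t/2)) ^ y * Real.log (2 * Real.sin (t/2))) y := by
      have h2 : HasDerivAt (fun y : ℝ => Real.log (2 * Real.sin (t/2)) * y)
          (Real.log (2 * Real.sin (t/2))) y := by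
        simpa using (hasDerivAt_id y).const_mul (Real.log (2 * Real.sin (t/2)))
      have h3 := h2.exp
      have hfun : (fun y : ℝ => (2*Real.sin (t/2)) ^ y)
          = fun y => Real.exp (Real.log (2*Real.sin (t/2)) * y) :=
        funext fun z => Real.rpow_def_of_pos hc0 z
      rw [hfun, Real.rpow_def_of_pos hc0]
      exact h3
    have := hexp.const_mul ((LL t)^k)
    refine this.congr_deriv (Eq.symm ?_)
    simp only [pow_succ, LL]
    ring

lemma summable_inv_pow {j : ℕ} (hj : 2 ≤ j) : Summable (fun k : ℕ => 1 / ((k:ℝ)+1)^j) := by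
  have h : Summable (fun n : ℕ => 1 / (n:ℝ)^j) := summable_one_div_nat_pow.mpr (by omega)
  have := (summable_nat_add_iff 1).mpr h
  refine this.congr fun k => ?_
  push_cast
  ring_nf

lemma SS_zero {j : ℕ} (hj : 2 ≤ j) :
    SS j 0 = (2/2^j - 1) * ∑' k : ℕ, 1 / ((k:ℝ)+1)^j := by
  have hs := summable_inv_pow hj
  have h1 : ∀ k:ℕ, ee j (k+1) 0 = (2/2^j) * (1/((k:ℝ)+1)^j) - 1/((k:ℝ)+1)^j := by
    intro k
    have hc : ((k:ℝ)+1) ≠ 0 := by positivity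
    have h2j : ((2:ℝ))^j ≠ 0 := by positivity
    simp only [ee]
    push_cast
    rw [add_zero, add_zero, mul_pow]
    field_simp
  calc SS j 0 = ∑' k : ℕ, ((2/2^j) * (1/((k:ℝ)+1)^j) - 1/((k:ℝ)+1)^j) := tsum_congr h1
    _ = (2/2^j) * (∑' k : ℕ, 1/((k:ℝ)+1)^j) - ∑' k : ℕ, 1/((k:ℝ)+1)^j := by
        rw [Summable.tsum_sub (hs.mul_left _) hs, tsum_mul_left]
    _ = (2/2^j - 1) * ∑' k : ℕ, 1 / ((k:ℝ)+1)^j := by ring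

lemma SS_one_zero : SS 1 0 = 0 := by
  have h1 : ∀ k:ℕ, ee 1 (k+1) 0 = 0 := by
    intro k
    have hc : ((k:ℝ)+1) ≠ 0 := by positivity
    simp only [ee, pow_one]
    push_cast
    rw [add_zero, add_zero]
    field_simp
    ring
  simp only [SS]
  rw [tsum_congr h1, tsum_zero]

lemma g0_zero : g0 0 = 0 := by
  have h1 : ∀ k:ℕ, 2 * Real.log (1 + (0:ℝ)/(2*((k:ℝ)+1))) - Real.log (1 + (0:ℝ)/((k:ℝ)+1))
      = 0 := by
    intro k
    simp
  simp only [g0]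
  rw [tsum_congr h1, tsum_zero]

lemma Z2_eq : ∑' k : ℕ, 1 / ((k:ℝ)+1)^2 = π^2/6 := by
  have hs : Summable (fun n:ℕ => 1/(n:ℝ)^2) := summable_one_div_nat_pow.mpr one_lt_two
  have h0 := hasSum_zeta_two.tsum_eq
  rw [Summable.tsum_eq_zero_add hs] at h0
  norm_num at h0
  rw [← h0]
  refine tsum_congr fun k => ?_
  push_cast
  ring_nf

/-- two functions with equal values on an open set have equal derivatives there -/
lemma derivStep {u v u' v' : ℝ → ℝ} {s : Set ℝ} (hs : IsOpen s)
    (h : ∀ x ∈ s, u x = v x) (hu : ∀ x ∈ s, HasDerivAt u (u' x) x)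
    (hv : ∀ x ∈ s, HasDerivAt v (v' x) x) : ∀ x ∈ s, u' x = v' x := by
  intro x hx
  have e1 : deriv u x = deriv v x :=
    Filter.EventuallyEq.deriv_eq (Filter.eventuallyEq_of_mem (hs.mem_nhds hx) h)
  rw [← (hu x hx).deriv, ← (hv x hx).deriv]
  exact e1

/-! the functions appearing as iterated derivatives of `π * exp (g0 x)` -/

def H0 (x : ℝ) : ℝ := π * Real.exp (g0 x)
def H1 (x : ℝ) : ℝ := π * (SS 1 x * Real.exp (g0 x))
def H2 (x : ℝ) : ℝ := π * ((-SS 2 x + SS 1 x^2) * Real.exp (g0 x))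
def H3 (x : ℝ) : ℝ := π * ((2*SS 3 x - 3*(SS 1 x*SS 2 x) + SS 1 x^3) * Real.exp (g0 x))
def H4 (x : ℝ) : ℝ :=
  π * ((-(6*SS 4 x) + 8*(SS 1 x*SS 3 x) + 3*SS 2 x^2 - 6*(SS 1 x^2*SS 2 x) + SS 1 x^4)
    * Real.exp (g0 x))
def H5 (x : ℝ) : ℝ :=
  π * ((24*SS 5 x - 30*(SS 1 x*SS 4 x) - 20*(SS 2 x*SS 3 x) + 20*(SS 1 x^2*SS 3 x)
    + 15*(SS 1 x*SS 2 x^2) - 10*(SS 1 x^3*SS 2 x) + SS 1 x^5) * Real.exp (g0 x))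

lemma hasDerivAt_H0 {x : ℝ} (hx : x ∈ II) : HasDerivAt H0 (H1 x) x := by
  have hE := (hasDerivAt_g0 hx).exp
  have h := hE.const_mul π
  have hfun : H0 = fun x => π * Real.exp (g0 x) := rfl
  rw [hfun]
  refine h.congr_deriv (Eq.symm ?_)
  rw [H1]
  ring

lemma hasDerivAt_H1 {x : ℝ} (hx : x ∈ II) : HasDerivAt H1 (H2 x) x := by
  have hE := (hasDerivAt_g0 hx).exp
  have d1 := hasDerivAt_SS (j := 0) hx
  have h := ((d1.fun_mul hE).const_mul π)
  have hfun : H1 = fun x => π * (SS 1 x * Real.exp (g0 x)) := rfl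
  rw [hfun]
  refine h.congr_deriv (Eq.symm ?_)
  rw [H2]
  push_cast
  ring

lemma hasDerivAt_H2 {x : ℝ} (hx : x ∈ II) : HasDerivAt H2 (H3 x) x := by
  have hE := (hasDerivAt_g0 hx).exp
  have d1 := hasDerivAt_SS (j := 0) hx
  have d2 := hasDerivAt_SS (j := 1) hx
  have hu := (d2.fun_neg.fun_add (d1.fun_pow 2))
  have h := ((hu.fun_mul hE).const_mul π)
  have hfun : H2 = fun x => π * ((-SS 2 x + SS 1 x^2) * Real.exp (g0 x)) := rfl
  rw [hfun]
  refine h.congr_deriv (Eq.symm ?_)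
  rw [H3]
  push_cast
  ring

lemma hasDerivAt_H3 {x : ℝ} (hx : x ∈ II) : HasDerivAt H3 (H4 x) x := by
  have hE := (hasDerivAt_g0 hx).exp
  have d1 := hasDerivAt_SS (j := 0) hx
  have d2 := hasDerivAt_SS (j := 1) hx
  have d3 := hasDerivAt_SS (j := 2) hx
  have hu := ((d3.const_mul 2).fun_sub ((d1.fun_mul d2).const_mul 3)).fun_add (d1.fun_pow 3)
  have h := ((hu.fun_mul hE).const_mul π)
  have hfun : H3 = fun x => π * ((2*SS 3 x - 3*(SS 1 x*SS 2 x) + SS 1 x^3)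
      * Real.exp (g0 x)) := rfl
  rw [hfun]
  refine h.congr_deriv (Eq.symm ?_)
  rw [H4]
  push_cast
  ring

lemma hasDerivAt_H4 {x : ℝ} (hx : x ∈ II) : HasDerivAt H4 (H5 x) x := by
  have hE := (hasDerivAt_g0 hx).exp
  have d1 := hasDerivAt_SS (j := 0) hx
  have d2 := hasDerivAt_SS (j := 1) hx
  have d3 := hasDerivAt_SS (j := 2) hx
  have d4 := hasDerivAt_SS (j := 3) hx
  have hu := (((((d4.const_mul 6).fun_neg.fun_add ((d1.fun_mul d3).const_mul 8)).fun_add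
    ((d2.fun_pow 2).const_mul 3)).fun_sub (((d1.fun_pow 2).fun_mul d2).const_mul 6)).fun_add (d1.fun_pow 4))
  have h := ((hu.fun_mul hE).const_mul π)
  have hfun : H4 = fun x => π * ((-(6*SS 4 x) + 8*(SS 1 x*SS 3 x) + 3*SS 2 x^2
      - 6*(SS 1 x^2*SS 2 x) + SS 1 x^4) * Real.exp (g0 x)) := rfl
  have hfun2 : (fun x => π * ((-(6*SS 4 x) + 8*(SS 1 x*SS 3 x) + 3*SS 2 x^2
      - 6*(SS 1 x^2*SS 2 x) + SS 1 x^4) * Real.exp (g0 x)))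
      = fun x => π * (((((-(6*SS 4 x) + 8*(SS 1 x*SS 3 x)) + 3*SS 2 x^2)
        - 6*(SS 1 x^2*SS 2 x)) + SS 1 x^4) * Real.exp (g0 x)) := by
    funext z
    ring
  rw [hfun, hfun2]
  refine h.congr_deriv (Eq.symm ?_)
  rw [H5]
  push_cast
  ring

lemma FF5_value : FF 5 0 = π * ((24*SS 5 0 - 20*(SS 2 0*SS 3 0)) * Real.exp (g0 0)) := by
  have e0 : ∀ x ∈ II, FF 0 x = H0 x := fun x hx => FF_zero_eq hx
  have e1 := derivStep isOpen_II e0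
    (fun x hx => hasDerivAt_FF (by norm_num) hx) (fun x hx => hasDerivAt_H0 hx)
  have e2 := derivStep isOpen_II e1
    (fun x hx => hasDerivAt_FF (by norm_num) hx) (fun x hx => hasDerivAt_H1 hx)
  have e3 := derivStep isOpen_II e2
    (fun x hx => hasDerivAt_FF (by norm_num) hx) (fun x hx => hasDerivAt_H2 hx)
  have e4 := derivStep isOpen_II e3
    (fun x hx => hasDerivAt_FF (by norm_num) hx) (fun x hx => hasDerivAt_H3 hx)
  have e5 := derivStep isOpen_II e4
    (fun x hx => hasDerivAt_FF (by norm_num) hx) (fun x hx => hasDerivAt_H4 hx)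
  have := e5 0 zero_mem_II
  rw [this, H5, SS_one_zero]
  ring

lemma zeta_cast {j : ℕ} (hj : 2 ≤ j) :
    riemannZeta (j : ℂ) = ((∑' k : ℕ, 1/((k:ℝ)+1)^j : ℝ) : ℂ) := by
  rw [zeta_eq_tsum_one_div_nat_add_one_cpow (by simp; exact_mod_cast hj)]
  rw [Complex.ofReal_tsum]
  refine tsum_congr fun n => ?_
  rw [Complex.cpow_natCast]
  push_cast
  rfl

end Ls6
end

open Ls6 MeasureTheory

theorem ls6_pi :
    ((∫ θ in (0:ℝ)..π, (Real.log (2 * Real.sin (θ/2)))^5 : ℝ) : ℂ) =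
      -(45/2) * (π : ℂ) * riemannZeta 5 - (5/4) * (π : ℂ)^3 * riemannZeta 3 := by
  have hFF5 : FF 5 0 = ∫ θ in (0:ℝ)..π, (Real.log (2 * Real.sin (θ/2)))^5 := by
    simp only [FF, LL, Real.rpow_zero, mul_one]
  have hval := FF5_value
  rw [g0_zero, Real.exp_zero, SS_zero (by norm_num : 2 ≤ 2),
    SS_zero (by norm_num : 2 ≤ 3), SS_zero (by norm_num : 2 ≤ 5), Z2_eq] at hval
  set Z3 : ℝ := ∑' k : ℕ, 1/((k:ℝ)+1)^3 with hZ3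
  set Z5 : ℝ := ∑' k : ℕ, 1/((k:ℝ)+1)^5 with hZ5
  have hz3 : riemannZeta 3 = (Z3 : ℂ) := by
    have := zeta_cast (j := 3) (by norm_num)
    rw [show ((3:ℕ):ℂ) = (3:ℂ) by norm_num] at this
    rw [this, hZ3]
  have hz5 : riemannZeta 5 = (Z5 : ℂ) := by
    have := zeta_cast (j := 5) (by norm_num)
    rw [show ((5:ℕ):ℂ) = (5:ℂ) by norm_num] at this
    rw [this, hZ5]
  rw [← hFF5, hval, hz3, hz5]
  push_cast
  ring
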